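/- Let P = (ℱ,μ) be a β-equitable probabilistic formula over Ξ^n (β ≥ 1). Then there exists a nonempty subfamily ℱ' ⊆ supp(μ) such that the 1-equitable formula P' = (ℱ', uniform distribution on ℱ') satisfies: for every δ ∈ [0,1] and every w ∈ Ξ^n, if the satisfaction of P by w is at most δ then the satisfaction of P' by w is at most 2δ·log₂(2β), and if the satisfaction of P by w is at least 1−δ then the satisfaction of P' by w is at least 1−2δ·log₂(2β). In particular, ℱ' ⊆ ℱ, so P' preserves any bound on the support size and on the query-set sizes of P, and is zero-one whenever P is. -/

import Mathlib

open scoped Classical BigOperators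

noncomputable section

/-- `w` and `v` differ in more than `ε·n` coordinates. -/
def FarWord {n : ℕ} {Ξ : Type*} (ε : ℝ) (w v : Fin n → Ξ) : Prop :=
  ε * n < ((Finset.univ.filter fun i => w i ≠ v i).card : ℝ)

/-- `w` is `ε`-far from every word of `L`. -/
def FarFrom {n : ℕ} {Ξ : Type*} (ε : ℝ) (w : Fin n → Ξ) (L : Set (Fin n → Ξ)) : Prop :=
  ∀ v ∈ L, FarWord ε w v

/-- `Q` is a witness against `w` with regard to `L`. -/
def IsWitness {n : ℕ} {Ξ : Type*} (L : Set (Fin n → Ξ)) (w : Fin n → Ξ)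
    (Q : Finset (Fin n)) : Prop :=
  ∀ u : Fin n → Ξ, (∀ i ∈ Q, u i = w i) → u ∉ L

/-- `μ` is a probability distribution over subsets of `[n]`. -/
def IsDistr {n : ℕ} (μ : Finset (Fin n) → ℝ) : Prop :=
  (∀ Q, 0 ≤ μ Q) ∧ ∑ Q : Finset (Fin n), μ Q = 1

/-- The support of a distribution over subsets of `[n]`. -/
def distSupp {n : ℕ} (μ : Finset (Fin n) → ℝ) : Finset (Finset (Fin n)) :=
  Finset.univ.filter fun Q => 0 < μ Q

/-- `μ(𝒜) = Σ_{Q ∈ 𝒜} μ(Q)`. -/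
def mass {n : ℕ} (μ : Finset (Fin n) → ℝ) (A : Finset (Finset (Fin n))) : ℝ :=
  ∑ Q ∈ A, μ Q

/-- Probability that a `p`-sampled subset of `[n]` (each index included independently
with probability `p`) satisfies the event `E`. -/
def sampleProb (n : ℕ) (p : ℝ) (E : Finset (Fin n) → Prop) : ℝ :=
  ∑ R ∈ Finset.univ.filter E, p ^ R.card * (1 - p) ^ (n - R.card)

/-- A non-adaptive 1-sided `(ε,δ)`-test for `L`: a distribution over subsets of `[n]`
that against every `ε`-far word yields a witness with probability at least `1-δ`. -/
def IsOneSidedTest {n : ℕ} {Ξ : Type*} (ε δ : ℝ) (μ : Finset (Fin n) → ℝ)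
    (L : Set (Fin n → Ξ)) : Prop :=
  IsDistr μ ∧
    ∀ w : Fin n → Ξ, FarFrom ε w L →
      1 - δ ≤ mass μ (Finset.univ.filter fun Q => IsWitness L w Q)


/-- A probabilistic formula over `Ξ^n`: a satisfaction function `S Q : Ξ^n → [0,1]`
for every query set `Q ⊆ [n]` (depending only on the restriction to `Q`, i.e., on
`w_Q ∈ Ξ^{|Q|}`), together with a probability distribution `μ` over the query sets. -/
structure ProbFormula (n : ℕ) (Ξ : Type*) where
  S : Finset (Fin n) → (Fin n → Ξ) → ℝ
  μ : Finset (Fin n) → ℝ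
  μ_nonneg : ∀ Q, 0 ≤ μ Q
  μ_sum : ∑ Q : Finset (Fin n), μ Q = 1
  S_range : ∀ Q w, 0 ≤ S Q w ∧ S Q w ≤ 1
  S_local : ∀ Q (w w' : Fin n → Ξ), (∀ i ∈ Q, w i = w' i) → S Q w = S Q w'

namespace ProbFormula

variable {n : ℕ} {Ξ : Type*}

/-- The satisfaction of `P` by `w`: the expectation of `S(w_Q)` for `(Q,S)` drawn
according to `μ`. -/
def sat (P : ProbFormula n Ξ) (w : Fin n → Ξ) : ℝ :=
  ∑ Q : Finset (Fin n), P.μ Q * P.S Q w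

/-- The support of the distribution of `P`. -/
def supp (P : ProbFormula n Ξ) : Finset (Finset (Fin n)) :=
  Finset.univ.filter fun Q => 0 < P.μ Q

/-- `P` is a `q`-formula: all query sets in the support have cardinality `q`. -/
def IsQForm (P : ProbFormula n Ξ) (q : ℕ) : Prop :=
  ∀ Q, 0 < P.μ Q → Q.card = q

/-- `P` is zero-one: all satisfaction functions of constraints in the support take
values in `{0,1}`. -/
def ZeroOne (P : ProbFormula n Ξ) : Prop :=
  ∀ Q, 0 < P.μ Q → ∀ w, P.S Q w = 0 ∨ P.S Q w = 1

/-- `P` is `β`-equitable: `μ(C₁) ≤ β·μ(C₂)` for all constraints in the support. -/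
def Equitable (P : ProbFormula n Ξ) (β : ℝ) : Prop :=
  ∀ Q Q', 0 < P.μ Q → 0 < P.μ Q' → P.μ Q ≤ β * P.μ Q'

/-- `P` is 1-equitable: `μ` is uniform over its support. -/
def Uniform (P : ProbFormula n Ξ) : Prop :=
  ∀ Q Q', 0 < P.μ Q → 0 < P.μ Q' → P.μ Q = P.μ Q'

/-- `P` is combinatorial: zero-one and 1-equitable. -/
def Combinatorial (P : ProbFormula n Ξ) : Prop :=
  P.ZeroOne ∧ P.Uniform

/-- `P` is a non-adaptive 2-sided partial `(ε,δ)`-test for `(L',L)`. -/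
def IsPartialTest (P : ProbFormula n Ξ) (ε δ : ℝ) (L' L : Set (Fin n → Ξ)) : Prop :=
  (∀ w ∈ L', 1 - δ ≤ P.sat w) ∧
  ∀ w : Fin n → Ξ, FarFrom ε w L → P.sat w ≤ δ

end ProbFormula

/-- The pair `(L',L)` is `ε`-nontrivial: `L'` is nonempty and some word of `Ξ^n` is
`ε`-far from `L`. -/
def NontrivialPair {n : ℕ} {Ξ : Type*} (ε : ℝ) (L' L : Set (Fin n → Ξ)) : Prop :=
  L'.Nonempty ∧ ∃ w : Fin n → Ξ, FarFrom ε w L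

private lemma key_sum_bound {n : ℕ} (F' : Finset (Finset (Fin n)))
    (μ g : Finset (Fin n) → ℝ) (c δ : ℝ) (hc : 0 ≤ c)
    (hμ : ∀ Q, 0 ≤ μ Q) (hg0 : ∀ Q, 0 ≤ g Q)
    (hkey : ∀ Q ∈ F', 1 ≤ c * μ Q)
    (hsum : ∑ Q : Finset (Fin n), μ Q * g Q ≤ δ) :
    ∑ Q ∈ F', g Q ≤ c * δ := by
  calc ∑ Q ∈ F', g Q ≤ ∑ Q ∈ F', c * (μ Q * g Q) := by
        refine Finset.sum_le_sum fun Q hQ => ?_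
        nlinarith [hkey Q hQ, hg0 Q]
    _ = c * ∑ Q ∈ F', μ Q * g Q := by rw [Finset.mul_sum]
    _ ≤ c * ∑ Q : Finset (Fin n), μ Q * g Q := by
        refine mul_le_mul_of_nonneg_left ?_ hc
        exact Finset.sum_le_sum_of_subset_of_nonneg (Finset.subset_univ _)
          fun Q _ _ => mul_nonneg (hμ Q) (hg0 Q)
    _ ≤ c * δ := mul_le_mul_of_nonneg_left hsum hc

/-- A `β`-equitable formula `P` has a nonempty subfamily
`ℱ' ⊆ supp(μ)` such that the 1-equitable formula with family `ℱ'` and the uniform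
distribution (whose satisfaction by `w` is `(Σ_{Q∈ℱ'} S_Q(w_Q))/|ℱ'|`) is
`2δ log₂(2β)`-sure, in the same direction, about every word `P` is `δ`-sure about.
Since `ℱ' ⊆ supp(μ)`, it preserves support size, query sizes, and the zero-one
property. -/
theorem stmt15 {n : ℕ} {Ξ : Type*} [Fintype Ξ] (β : ℝ) (hβ : 1 ≤ β)
    (P : ProbFormula n Ξ) (heq : P.Equitable β) :
    ∃ F' : Finset (Finset (Fin n)),
      F'.Nonempty ∧ (∀ Q ∈ F', 0 < P.μ Q) ∧
      ∀ (δ : ℝ), 0 ≤ δ → δ ≤ 1 → ∀ w : Fin n → Ξ,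
        (P.sat w ≤ δ →
          (∑ Q ∈ F', P.S Q w) / (F'.card : ℝ) ≤ 2 * δ * Real.logb 2 (2*β)) ∧
        (1 - δ ≤ P.sat w →
          1 - 2 * δ * Real.logb 2 (2*β) ≤ (∑ Q ∈ F', P.S Q w) / (F'.card : ℝ)) := by
  classical
  set L := Real.logb 2 (2*β) with hLdef
  have hL1 : 1 ≤ L := by
    have h2 : (2:ℝ) ≤ 2*β := by linarith
    have := (Real.logb_le_logb (by norm_num : (1:ℝ) < 2)
      (by norm_num : (0:ℝ) < 2) (by linarith : (0:ℝ) < 2*β)).mpr h2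
    simpa using this
  have hL0 : 0 < L := by linarith
  -- support is nonempty
  have hsupp_ne : (Finset.univ.filter fun Q => 0 < P.μ Q).Nonempty := by
    by_contra h
    have h0 : ∀ Q : Finset (Fin n), P.μ Q = 0 := by
      intro Q
      rcases lt_or_eq_of_le (P.μ_nonneg Q) with h' | h'
      · exact absurd ⟨Q, Finset.mem_filter.2 ⟨Finset.mem_univ _, h'⟩⟩ h
      · exact h'.symm
    have := P.μ_sum
    simp [h0] at this
  set supp := Finset.univ.filter fun Q => 0 < P.μ Q with hsuppdef
  obtain ⟨Q₀, hQ₀, hmax⟩ := Finset.exists_max_image supp P.μ hsupp_ne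
  set m := P.μ Q₀ with hmdef
  have hm0 : 0 < m := (Finset.mem_filter.1 hQ₀).2
  -- pick minimal k with β < 2^(k+1)
  have hex : ∃ k : ℕ, β < 2^(k+1) := by
    obtain ⟨k, hk⟩ := pow_unbounded_of_one_lt β (by norm_num : (1:ℝ) < 2)
    exact ⟨k, lt_of_lt_of_le hk (by
      apply pow_le_pow_right₀ (by norm_num : (1:ℝ) ≤ 2) (Nat.le_succ k))⟩
  set k := Nat.find hex with hkdef
  have hkspec : β < 2^(k+1) := Nat.find_spec hex
  have hkL : (k:ℝ) + 1 ≤ L := by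
    rcases Nat.eq_zero_or_pos k with hk0 | hkpos
    · rw [hk0]; simpa using hL1
    · have hmin : ¬ β < 2^((k-1)+1) := Nat.find_min hex (by omega)
      have h2k : (2:ℝ)^k ≤ β := by
        have : k - 1 + 1 = k := by omega
        rw [this] at hmin; linarith [not_lt.1 hmin]
      have h2k1 : (2:ℝ)^(k+1) ≤ 2*β := by
        rw [pow_succ]; nlinarith
      have : Real.logb 2 ((2:ℝ)^(k+1)) ≤ L := by
        rw [hLdef]
        exact (Real.logb_le_logb (by norm_num : (1:ℝ) < 2)
          (by positivity) (by linarith : (0:ℝ) < 2*β)).mpr h2k1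
      rwa [Real.logb_pow, Real.logb_self_eq_one (by norm_num), mul_one,
        Nat.cast_add, Nat.cast_one] at this
  -- bucket index function
  have hexQ : ∀ Q ∈ supp, ∃ j : ℕ, m / 2^(j+1) < P.μ Q := by
    intro Q hQ
    have hμQ : 0 < P.μ Q := (Finset.mem_filter.1 hQ).2
    refine ⟨k, ?_⟩
    have hmβ : m ≤ β * P.μ Q := heq Q₀ Q hm0 hμQ
    have : m < 2^(k+1) * P.μ Q := lt_of_le_of_lt hmβ (by nlinarith)
    rw [div_lt_iff₀ (by positivity)]
    linarith [this]
  set f : Finset (Fin n) → ℕ := fun Q =>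
    if h : ∃ j : ℕ, m / 2^(j+1) < P.μ Q then Nat.find h else 0 with hfdef
  have hf_lt : ∀ Q ∈ supp, m / 2^(f Q + 1) < P.μ Q := by
    intro Q hQ
    have h := hexQ Q hQ
    simp only [hfdef, dif_pos h]
    exact Nat.find_spec h
  have hf_le : ∀ Q ∈ supp, P.μ Q ≤ m / 2^(f Q) := by
    intro Q hQ
    have h := hexQ Q hQ
    simp only [hfdef, dif_pos h]
    rcases Nat.eq_zero_or_pos (Nat.find h) with h0 | hpos
    · rw [h0]; simpa using hmax Q hQ
    · have hmin : ¬ m / 2^((Nat.find h - 1)+1) < P.μ Q := Nat.find_min h (by omega)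
      have : Nat.find h - 1 + 1 = Nat.find h := by omega
      rw [this] at hmin
      exact not_lt.1 hmin
  have hf_mem : ∀ Q ∈ supp, f Q ∈ Finset.range (k+1) := by
    intro Q hQ
    have h := hexQ Q hQ
    simp only [hfdef, dif_pos h, Finset.mem_range]
    have : Nat.find h ≤ k := Nat.find_le (by
      have hμQ : 0 < P.μ Q := (Finset.mem_filter.1 hQ).2
      have hmβ : m ≤ β * P.μ Q := heq Q₀ Q hm0 hμQ
      rw [div_lt_iff₀ (by positivity)]
      nlinarith)
    omega
  -- total mass over the support is 1
  have hmass1 : ∑ Q ∈ supp, P.μ Q = 1 := by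
    rw [← P.μ_sum]
    refine Finset.sum_subset (Finset.subset_univ _) fun Q _ hQ => ?_
    rcases lt_or_eq_of_le (P.μ_nonneg Q) with h' | h'
    · exact absurd (show Q ∈ supp by
        rw [hsuppdef]; exact Finset.mem_filter.2 ⟨Finset.mem_univ Q, h'⟩) hQ
    · exact h'.symm
  have hfiber : ∑ j ∈ Finset.range (k+1),
      ∑ Q ∈ supp.filter (fun Q => f Q = j), P.μ Q = 1 := by
    rw [Finset.sum_fiberwise_of_maps_to hf_mem, hmass1]
  -- pigeonhole: pick a heavy bucket
  have hpig : ∃ j ∈ Finset.range (k+1),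
      (1:ℝ)/(k+1) ≤ ∑ Q ∈ supp.filter (fun Q => f Q = j), P.μ Q := by
    apply Finset.exists_le_of_sum_le (Finset.nonempty_range_iff.2 (Nat.succ_ne_zero k))
    rw [hfiber, Finset.sum_const, Finset.card_range, nsmul_eq_mul, mul_one_div]
    push_cast
    rw [div_self (by positivity : ((k:ℝ)+1) ≠ 0)]
  obtain ⟨j, _, hjmass⟩ := hpig
  set F' := supp.filter (fun Q => f Q = j) with hF'def
  have hk1pos : (0:ℝ) < (k:ℝ) + 1 := by positivity
  have hF'ne : F'.Nonempty := by
    rcases Finset.eq_empty_or_nonempty F' with h | h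
    · rw [h] at hjmass; simp at hjmass
      have hpos : (0:ℝ) < 1/((k:ℝ)+1) := by positivity
      linarith
    · exact h
  have hcard0 : (0:ℝ) < (F'.card : ℝ) := by
    exact_mod_cast Finset.card_pos.2 hF'ne
  -- element-wise facts about F'
  have hpos' : ∀ Q ∈ F', 0 < P.μ Q := fun Q hQ =>
    (Finset.mem_filter.1 ((Finset.mem_filter.1 hQ).1)).2
  have hlb' : ∀ Q ∈ F', m / 2^(j+1) < P.μ Q := by
    intro Q hQ
    have hQs : Q ∈ supp := (Finset.mem_filter.1 hQ).1
    have hQj : f Q = j := (Finset.mem_filter.1 hQ).2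
    have := hf_lt Q hQs; rwa [hQj] at this
  have hub' : ∀ Q ∈ F', P.μ Q ≤ m / 2^j := by
    intro Q hQ
    have hQs : Q ∈ supp := (Finset.mem_filter.1 hQ).1
    have hQj : f Q = j := (Finset.mem_filter.1 hQ).2
    have := hf_le Q hQs; rwa [hQj] at this
  set c := (F'.card : ℝ) with hcdef
  have hcard0' : 0 < c := hcard0
  have hmassub : ∑ Q' ∈ F', P.μ Q' ≤ c * (m / 2^j) := by
    rw [hcdef, ← nsmul_eq_mul, ← Finset.sum_const]
    exact Finset.sum_le_sum hub'
  set K := (k : ℝ) with hKdef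
  have hK0 : 0 ≤ K := Nat.cast_nonneg k
  have hKL : K + 1 ≤ L := hkL
  have hK1pos : (0:ℝ) < K + 1 := hk1pos
  have hjmass' : (1:ℝ)/(K+1) ≤ ∑ Q' ∈ F', P.μ Q' := hjmass
  clear_value F' c K
  clear hjmass hf_lt hf_le hf_mem hfiber hexQ hfdef hkspec hkL hk1pos
  -- each μ Q in F' is at least 1/(2 L card)
  have hkey : ∀ Q ∈ F', 1 ≤ (2 * L * c) * P.μ Q := by
    intro Q hQ
    have hlb := hlb' Q hQ
    have h2j : (0:ℝ) < 2^j := by positivity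
    have h2j1 : (0:ℝ) < 2^(j+1) := by positivity
    have e : c * (m / 2^j) = 2 * c * (m / 2^(j+1)) := by
      rw [pow_succ]; field_simp
    have hstep : (1:ℝ)/(K+1) ≤ 2 * c * P.μ Q := by
      nlinarith [hjmass', hmassub, hlb, hcard0']
    have h1 : 1 ≤ (K+1) * (2 * c * P.μ Q) := by
      rw [div_le_iff₀ hK1pos] at hstep
      linarith [hstep]
    have hμQ0 : 0 < P.μ Q := hpos' Q hQ
    calc (1:ℝ) ≤ (K+1) * (2 * c * P.μ Q) := h1
      _ ≤ L * (2 * c * P.μ Q) := by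
          refine mul_le_mul_of_nonneg_right hKL ?_
          positivity
      _ = (2 * L * c) * P.μ Q := by ring
  -- conclude
  refine ⟨F', hF'ne, hpos', ?_⟩
  intro δ hδ0 _ w
  have hc0 : (0:ℝ) ≤ 2 * L * c := by positivity
  have hcardR : (0:ℝ) < (F'.card:ℝ) := by rw [← hcdef]; exact hcard0
  constructor
  · intro hsat
    have := key_sum_bound F' P.μ (fun Q => P.S Q w) (2 * L * c) δ hc0
      P.μ_nonneg (fun Q => (P.S_range Q w).1) hkey hsat
    rw [hcdef] at this
    rw [div_le_iff₀ hcardR]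
    calc ∑ Q ∈ F', P.S Q w ≤ (2 * L * F'.card) * δ := this
      _ = 2 * δ * L * F'.card := by ring
  · intro hsat
    have hsum : ∑ Q : Finset (Fin n), P.μ Q * (1 - P.S Q w) ≤ δ := by
      have e : ∑ Q : Finset (Fin n), P.μ Q * (1 - P.S Q w)
          = (∑ Q : Finset (Fin n), P.μ Q) - P.sat w := by
        rw [ProbFormula.sat, ← Finset.sum_sub_distrib]
        exact Finset.sum_congr rfl fun Q _ => by ring
      rw [e, P.μ_sum]; linarith
    have := key_sum_bound F' P.μ (fun Q => 1 - P.S Q w) (2 * L * c) δ hc0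
      P.μ_nonneg (fun Q => sub_nonneg.2 (P.S_range Q w).2) hkey hsum
    rw [hcdef] at this
    have hsplit : ∑ Q ∈ F', (1 - P.S Q w) = (F'.card : ℝ) - ∑ Q ∈ F', P.S Q w := by
      rw [Finset.sum_sub_distrib, Finset.sum_const, nsmul_eq_mul, mul_one]
    rw [le_div_iff₀ hcardR]
    rw [hsplit] at this
    nlinarith [this]
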